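/- Let V be a real inner product space with orthogonal almost complex structure J and Q a symmetric hybrid bilinear form. With φ(Q) as defined by the Bochner correction term, φ(Q) satisfies the first Bianchi identity: φ(Q)(x,y,z,u) + φ(Q)(y,z,x,u) + φ(Q)(z,x,y,u) = 0 for all x,y,z,u ∈ V. -/

import Mathlib

noncomputable def phi {V : Type*} [NormedAddCommGroup V] [InnerProductSpace ℝ V]
    (J : V →ₗ[ℝ] V) (Q : LinearMap.BilinForm ℝ V) (x y z u : V) : ℝ :=
  (inner ℝ x u : ℝ) * Q y z - (inner ℝ x z : ℝ) * Q y u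
  + (inner ℝ y z : ℝ) * Q x u - (inner ℝ y u : ℝ) * Q x z
  + (inner ℝ x (J u) : ℝ) * Q y (J z) - (inner ℝ x (J z) : ℝ) * Q y (J u)
  - 2 * (inner ℝ x (J y) : ℝ) * Q z (J u)
  + (inner ℝ y (J z) : ℝ) * Q x (J u) - (inner ℝ y (J u) : ℝ) * Q x (J z)
  - 2 * (inner ℝ z (J u) : ℝ) * Q x (J y)

theorem stmt3 {V : Type*} [NormedAddCommGroup V] [InnerProductSpace ℝ V]
    (J : V →ₗ[ℝ] V) (hJ2 : ∀ x, J (J x) = -x)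
    (hJorth : ∀ x y : V, inner ℝ (J x) (J y) = (inner ℝ x y : ℝ))
    (Q : LinearMap.BilinForm ℝ V)
    (hsym : ∀ x y, Q x y = Q y x) (hhyb : ∀ x y, Q (J x) (J y) = Q x y) :
    ∀ x y z u : V, phi J Q x y z u + phi J Q y z x u + phi J Q z x y u = 0 := by
  have wskew : ∀ a b : V, (inner ℝ a (J b) : ℝ) = -(inner ℝ b (J a) : ℝ) := by
    intro a b
    rw [← hJorth a (J b), hJ2, inner_neg_right, real_inner_comm]
  have qskew : ∀ a b : V, Q a (J b) = -(Q b (J a)) := by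
    intro a b
    rw [← hhyb a (J b), hJ2, map_neg, hsym (J a) b]
  intro x y z u
  simp only [phi]
  rw [wskew y x, wskew z x, wskew z y,
    qskew y x, qskew z x, qskew z y,
    hsym y x, hsym z x, hsym z y,
    real_inner_comm y x, real_inner_comm z x, real_inner_comm z y]
  ring
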